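/- Let g = l ⊕ m be a reductive decomposition ([l,m] ⊆ m) and G = (g, [,], ϖ, φ) a Lie quasi-bialgebra canonically compatible with it (ϖ_l = 0, ⟨m^⊥, ϖ_• m^⊥⟩ = 0, φ ∈ Alt(l⊗l⊗l ⊕ l⊗m⊗m ⊕ m⊗m⊗m), φ ≡ 0 mod l), with double d = g ⊕ g*. Denote by s = (p_l)* : l* → g* the dual of the projection p_l : g → l along m. Then for all p ∈ l* and all n ∈ ℕ: ad^{2n}_{sp}(m^⊥) ⊆ m^⊥, ad^{2n}_{sp}(l) ⊆ l, ad^{2n+1}_{sp}(m^⊥) ⊆ l, ad^{2n+1}_{sp}(s(l*)) ⊆ m^⊥, and ad^n_{sp}(m ⊕ l^⊥) ⊆ m ⊕ l^⊥, where ad is the adjoint action of the double d. -/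

import Mathlib

section

/-- The bracket of the canonical double `d = g ⊕ g*` of a Lie quasi-bialgebra
`(g, [,], ϖ, φ)`, where `c ξ η = ⟨ξ⊗η⊗1, φ⟩`. -/
def brD {K L : Type*} [Field K] [LieRing L] [LieAlgebra K L]
    (ϖ : L →ₗ[K] Module.Dual K L →ₗ[K] L)
    (c : Module.Dual K L →ₗ[K] Module.Dual K L →ₗ[K] L) :
    L × Module.Dual K L → L × Module.Dual K L → L × Module.Dual K L :=
  fun X Y =>
    (⁅X.1, Y.1⁆ + ϖ X.1 Y.2 - ϖ Y.1 X.2 + c X.2 Y.2,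
      - Y.2 ∘ₗ LieAlgebra.ad K L X.1 + X.2 ∘ₗ LieAlgebra.ad K L Y.1
        + Y.2 ∘ₗ ϖ.flip X.2)

/-- For a Lie quasi-bialgebra `G` canonically compatible with a reductive
decomposition `g = l ⊕ m`, the powers of `ad_{sp}` (adjoint action of the double,
`p ∈ l*`, `s` the dual of the projection onto `l`) satisfy:
`ad^{2n}(m^⊥) ⊆ m^⊥`, `ad^{2n}(l) ⊆ l`, `ad^{2n+1}(m^⊥) ⊆ l`, `ad^{2n+1}(l) ⊆ m^⊥`,
and `ad^n(m ⊕ l^⊥) ⊆ m ⊕ l^⊥`. -/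
theorem stmt_17 {K L : Type*} [Field K] [LieRing L] [LieAlgebra K L]
    [FiniteDimensional K L]
    (l m : Submodule K L) (hc : IsCompl l m)
    (hsub : ∀ x ∈ l, ∀ y ∈ l, ⁅x, y⁆ ∈ l)
    (hred : ∀ x ∈ l, ∀ u ∈ m, ⁅x, u⁆ ∈ m)
    (ϖ : L →ₗ[K] Module.Dual K L →ₗ[K] L)
    (c : Module.Dual K L →ₗ[K] Module.Dual K L →ₗ[K] L)
    -- canonical compatibility of `G` with the reductive decomposition:
    (hϖl : ∀ z ∈ l, ϖ z = 0)
    (hϖm : ∀ (x : L), ∀ ξ ∈ m.dualAnnihilator, ∀ η ∈ m.dualAnnihilator, ξ (ϖ x η) = 0)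
    -- `φ ∈ Alt(l⊗l⊗l ⊕ l⊗m⊗m ⊕ m⊗m⊗m)`:
    (hAlt1 : ∀ ξ ∈ m.dualAnnihilator, ∀ η ∈ m.dualAnnihilator,
      ∀ ζ ∈ l.dualAnnihilator, ζ (c ξ η) = 0)
    (hAlt2 : ∀ ξ ∈ m.dualAnnihilator, ∀ η ∈ l.dualAnnihilator,
      ∀ ζ ∈ m.dualAnnihilator, ζ (c ξ η) = 0)
    (hAlt3 : ∀ ξ ∈ l.dualAnnihilator, ∀ η ∈ m.dualAnnihilator,
      ∀ ζ ∈ m.dualAnnihilator, ζ (c ξ η) = 0)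
    -- `φ ≡ 0 mod l`:
    (hmod : ∀ ξ ∈ l.dualAnnihilator, ∀ η ∈ l.dualAnnihilator,
      ∀ ζ ∈ l.dualAnnihilator, ζ (c ξ η) = 0)
    (p : Module.Dual K ↥l) :
    (∀ (n : ℕ), ∀ ξ ∈ m.dualAnnihilator,
        ((fun Y => brD ϖ c (0, p ∘ₗ Submodule.linearProjOfIsCompl l m hc) Y)^[2 * n]
            (0, ξ)).1 = 0
          ∧ ((fun Y => brD ϖ c (0, p ∘ₗ Submodule.linearProjOfIsCompl l m hc) Y)^[2 * n]
              (0, ξ)).2 ∈ m.dualAnnihilator)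
      ∧ (∀ (n : ℕ), ∀ z ∈ l,
          ((fun Y => brD ϖ c (0, p ∘ₗ Submodule.linearProjOfIsCompl l m hc) Y)^[2 * n]
              (z, 0)).1 ∈ l
            ∧ ((fun Y => brD ϖ c (0, p ∘ₗ Submodule.linearProjOfIsCompl l m hc) Y)^[2 * n]
                (z, 0)).2 = 0)
      ∧ (∀ (n : ℕ), ∀ ξ ∈ m.dualAnnihilator,
          ((fun Y => brD ϖ c (0, p ∘ₗ Submodule.linearProjOfIsCompl l m hc) Y)^[2 * n + 1]
              (0, ξ)).1 ∈ l
            ∧ ((fun Y => brD ϖ c (0, p ∘ₗ Submodule.linearProjOfIsCompl l m hc) Y)^[2 * n + 1]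
                (0, ξ)).2 = 0)
      ∧ (∀ (n : ℕ), ∀ z ∈ l,
          ((fun Y => brD ϖ c (0, p ∘ₗ Submodule.linearProjOfIsCompl l m hc) Y)^[2 * n + 1]
              (z, 0)).1 = 0
            ∧ ((fun Y => brD ϖ c (0, p ∘ₗ Submodule.linearProjOfIsCompl l m hc) Y)^[2 * n + 1]
                (z, 0)).2 ∈ m.dualAnnihilator)
      ∧ (∀ (n : ℕ), ∀ u ∈ m, ∀ ξ ∈ l.dualAnnihilator,
          ((fun Y => brD ϖ c (0, p ∘ₗ Submodule.linearProjOfIsCompl l m hc) Y)^[n]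
              (u, ξ)).1 ∈ m
            ∧ ((fun Y => brD ϖ c (0, p ∘ₗ Submodule.linearProjOfIsCompl l m hc) Y)^[n]
                (u, ξ)).2 ∈ l.dualAnnihilator) := by
  set sp : Module.Dual K L := p ∘ₗ Submodule.linearProjOfIsCompl l m hc with hspdef
  set F : L × Module.Dual K L → L × Module.Dual K L :=
    fun Y => brD ϖ c (0, sp) Y with hFdef
  -- sp vanishes on m
  have hspm : sp ∈ m.dualAnnihilator := by
    rw [Submodule.mem_dualAnnihilator]
    intro u hu
    exact (congrArg p (Submodule.projectionOnto_apply_of_mem_right hc hu)).trans (map_zero p)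
  -- sp vanishes on m (pointwise)
  have hspm' : ∀ u ∈ m, sp u = 0 := (Submodule.mem_dualAnnihilator sp).mp hspm
  -- one step on (0, ξ) with ξ ∈ m⊥
  have stepA : ∀ ξ ∈ m.dualAnnihilator, F (0, ξ) = (c sp ξ, 0) ∧ c sp ξ ∈ l := by
    intro ξ hξ
    constructor
    · have h2 : ξ ∘ₗ ϖ.flip sp = 0 := by
        ext y
        simpa using hϖm y ξ hξ sp hspm
      simp [hFdef, brD, h2]
    · rw [← Subspace.forall_mem_dualAnnihilator_apply_eq_zero_iff]
      intro ζ hζ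
      exact hAlt1 sp hspm ξ hξ ζ hζ
  -- one step on (z, 0) with z ∈ l
  have stepB : ∀ z ∈ l, F (z, 0) = (0, sp ∘ₗ LieAlgebra.ad K L z)
      ∧ sp ∘ₗ LieAlgebra.ad K L z ∈ m.dualAnnihilator := by
    intro z hz
    constructor
    · simp [hFdef, brD, hϖl z hz]
    · rw [Submodule.mem_dualAnnihilator]
      intro u hu
      simpa using hspm' _ (hred z hz u hu)
  -- one step preserves m ⊕ l⊥
  have stepC : ∀ u ∈ m, ∀ ξ ∈ l.dualAnnihilator,
      (F (u, ξ)).1 ∈ m ∧ (F (u, ξ)).2 ∈ l.dualAnnihilator := by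
    intro u hu ξ hξ
    constructor
    · have h1 : -(ϖ u sp) ∈ m := by
        rw [← Subspace.forall_mem_dualAnnihilator_apply_eq_zero_iff]
        intro η hη
        simpa using hϖm u η hη sp hspm
      have h2 : c sp ξ ∈ m := by
        rw [← Subspace.forall_mem_dualAnnihilator_apply_eq_zero_iff]
        intro η hη
        exact hAlt2 sp hspm ξ hξ η hη
      have : (F (u, ξ)).1 = -(ϖ u sp) + c sp ξ := by
        simp [hFdef, brD, sub_eq_add_neg, add_comm]
      rw [this]
      exact m.add_mem h1 h2
    · rw [Submodule.mem_dualAnnihilator]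
      intro z hz
      have h1 : sp ⁅u, z⁆ = 0 := by
        have : ⁅u, z⁆ = -⁅z, u⁆ := by rw [← lie_skew]
        rw [this, map_neg, hspm' _ (hred z hz u hu), neg_zero]
      have h2 : ξ (ϖ z sp) = 0 := by rw [hϖl z hz]; simp
      simp [hFdef, brD, h1, h2]
  -- even iterates on (0, ξ), ξ ∈ m⊥
  have even1 : ∀ n : ℕ, ∀ ξ ∈ m.dualAnnihilator,
      (F^[2 * n] (0, ξ)).1 = 0 ∧ (F^[2 * n] (0, ξ)).2 ∈ m.dualAnnihilator := by
    intro n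
    induction n with
    | zero => intro ξ hξ; simpa using hξ
    | succ k ih =>
      intro ξ hξ
      have h2 : 2 * (k + 1) = 2 + 2 * k := by ring
      rw [h2, Function.iterate_add_apply]
      obtain ⟨hz, hη⟩ := ih ξ hξ
      have heq : F^[2 * k] (0, ξ) = (0, (F^[2 * k] (0, ξ)).2) := Prod.ext hz rfl
      rw [heq]
      obtain ⟨hFA, hlA⟩ := stepA _ hη
      have h21 : F^[2] (0, (F^[2 * k] (0, ξ)).2) = F (c sp (F^[2 * k] (0, ξ)).2, 0) := by
        rw [show (2:ℕ) = 1 + 1 from rfl, Function.iterate_add_apply]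
        simp [hFA]
      rw [h21, (stepB _ hlA).1]
      exact ⟨rfl, (stepB _ hlA).2⟩
  -- even iterates on (z, 0), z ∈ l
  have even2 : ∀ n : ℕ, ∀ z ∈ l,
      (F^[2 * n] (z, 0)).1 ∈ l ∧ (F^[2 * n] (z, 0)).2 = 0 := by
    intro n
    induction n with
    | zero => intro z hz; simpa using hz
    | succ k ih =>
      intro z hz
      have h2 : 2 * (k + 1) = 2 + 2 * k := by ring
      rw [h2, Function.iterate_add_apply]
      obtain ⟨hz', hη⟩ := ih z hz
      have heq : F^[2 * k] (z, 0) = ((F^[2 * k] (z, 0)).1, 0) := Prod.ext rfl hη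
      rw [heq]
      obtain ⟨hFB, hmB⟩ := stepB _ hz'
      have h21 : F^[2] ((F^[2 * k] (z, 0)).1, 0)
          = F (0, sp ∘ₗ LieAlgebra.ad K L (F^[2 * k] (z, 0)).1) := by
        rw [show (2:ℕ) = 1 + 1 from rfl, Function.iterate_add_apply]
        simp [hFB]
      rw [h21, (stepA _ hmB).1]
      exact ⟨(stepA _ hmB).2, rfl⟩
  refine ⟨even1, even2, ?_, ?_, ?_⟩
  · -- odd on (0, ξ)
    intro n ξ hξ
    rw [show 2 * n + 1 = 1 + 2 * n from by ring, Function.iterate_add_apply]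
    obtain ⟨hz, hη⟩ := even1 n ξ hξ
    have heq : F^[2 * n] (0, ξ) = (0, (F^[2 * n] (0, ξ)).2) := Prod.ext hz rfl
    rw [heq]
    simp only [Function.iterate_one]
    rw [(stepA _ hη).1]
    exact ⟨(stepA _ hη).2, rfl⟩
  · -- odd on (z, 0)
    intro n z hz
    rw [show 2 * n + 1 = 1 + 2 * n from by ring, Function.iterate_add_apply]
    obtain ⟨hz', hη⟩ := even2 n z hz
    have heq : F^[2 * n] (z, 0) = ((F^[2 * n] (z, 0)).1, 0) := Prod.ext rfl hη
    rw [heq]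
    simp only [Function.iterate_one]
    rw [(stepB _ hz').1]
    exact ⟨rfl, (stepB _ hz').2⟩
  · -- m ⊕ l⊥ invariant
    intro n
    induction n with
    | zero =>
      intro u hu ξ hξ
      simp only [Function.iterate_zero, id_eq]
      exact ⟨hu, hξ⟩
    | succ k ih =>
      intro u hu ξ hξ
      rw [show k + 1 = 1 + k from by ring, Function.iterate_add_apply]
      obtain ⟨h1, h2⟩ := ih u hu ξ hξ
      have heq : F^[k] (u, ξ) = ((F^[k] (u, ξ)).1, (F^[k] (u, ξ)).2) := rfl
      simp only [Function.iterate_one]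
      exact stepC _ h1 _ h2

end
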